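/- Let δ, ε > 0 and suppose l : [0,∞) → [0,∞) is continuous with l(t) → l_∞ exponentially: |l(t) - l_∞| ≤ C e^{-ηt} for some η > 0 with η < δ + ε. If s solves s'(t) = -(δ+ε)s(t) + l(t)(1 - s(t)) with s(0) ∈ [0,1), then |s(t) - s_∞| ≤ C' e^{-ηt} for some constant C', where s_∞ = l_∞/(δ+ε+l_∞). -/

import Mathlib

theorem receptor_inherits_decay (δ ε lInf η C : ℝ) (hδ : 0 < δ) (hε : 0 < ε)
    (hη : 0 < η) (hη' : η < δ + ε) (hC : 0 < C)
    (l : ℝ → ℝ) (hl_cont : Continuous l) (hl_nonneg : ∀ t, 0 ≤ t → 0 ≤ l t)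
    (hl_conv : ∀ t, 0 ≤ t → |l t - lInf| ≤ C * Real.exp (-η * t))
    (s : ℝ → ℝ)
    (hode : ∀ t, 0 ≤ t → HasDerivAt s (-(δ + ε) * s t + l t * (1 - s t)) t)
    (hs0 : 0 ≤ s 0) (hs0' : s 0 < 1) :
    ∃ C' : ℝ, 0 < C' ∧ ∀ t, 0 ≤ t →
      |s t - lInf / (δ + ε + lInf)| ≤ C' * Real.exp (-η * t) := by
  set k : ℝ := δ + ε with hkdef
  have hk : 0 < k := by positivity
  have hkη : 0 < k - η := by linarith
  -- lInf is nonnegative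
  have htend0 : Filter.Tendsto (fun t : ℝ => -(C * Real.exp (-η * t)))
      Filter.atTop (nhds 0) := by
    have hbot : Filter.Tendsto (fun t : ℝ => -η * t) Filter.atTop Filter.atBot := by
      simpa using Filter.Tendsto.const_mul_atTop_of_neg
        (by linarith : -η < (0:ℝ)) (Filter.tendsto_id (α := ℝ))
    have h1 : Filter.Tendsto (fun t : ℝ => Real.exp (-η * t)) Filter.atTop (nhds 0) :=
      Real.tendsto_exp_atBot.comp hbot
    simpa using (h1.const_mul C).neg
  have hlInf : 0 ≤ lInf := by
    refine le_of_tendsto htend0 ?_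
    filter_upwards [Filter.eventually_ge_atTop (0 : ℝ)] with t ht
    have h1 := (abs_le.mp (hl_conv t ht)).2
    have h2 := hl_nonneg t ht
    linarith
  have hks : 0 < k + lInf := by linarith
  set sInf : ℝ := lInf / (k + lInf) with hsInfdef
  have hkey : sInf * (k + lInf) = lInf := by
    rw [hsInfdef, div_mul_cancel₀ _ hks.ne']
  have hsInf0 : 0 ≤ sInf := div_nonneg hlInf hks.le
  have hsInf1 : sInf ≤ 1 := by
    rw [hsInfdef, div_le_one hks]; linarith
  -- the integral of l and the integrating factor exponent
  set L : ℝ → ℝ := fun t => ∫ r in (0:ℝ)..t, l r with hLdef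
  have hL : ∀ t, HasDerivAt L (l t) t := fun t =>
    intervalIntegral.integral_hasDerivAt_right (hl_cont.intervalIntegrable 0 t)
      (hl_cont.stronglyMeasurableAtFilter _ _) hl_cont.continuousAt
  have hLcont : Continuous L := by
    rw [continuous_iff_continuousAt]; exact fun t => (hL t).continuousAt
  set A : ℝ → ℝ := fun t => k * t + L t with hAdef
  have hA : ∀ t, HasDerivAt A (k + l t) t := by
    intro t
    exact (((hasDerivAt_id t).const_mul k).add (hL t)).congr_deriv (by ring)
  have hAcont : Continuous A := (continuous_const.mul continuous_id).add hLcont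
  have hA0 : A 0 = 0 := by simp [hAdef, hLdef]
  -- A t - A r ≥ k * (t - r) for 0 ≤ r ≤ t
  have hAgrow : ∀ r t : ℝ, 0 ≤ r → r ≤ t → k * (t - r) ≤ A t - A r := by
    intro r t hr hrt
    have h1 : 0 ≤ ∫ x in r..t, l x :=
      intervalIntegral.integral_nonneg hrt (fun x hx => hl_nonneg x (hr.trans hx.1))
    have h2 : L t - L r = ∫ x in r..t, l x := by
      rw [hLdef]
      simp only
      rw [← intervalIntegral.integral_add_adjacent_intervals
        (hl_cont.intervalIntegrable 0 r) (hl_cont.intervalIntegrable r t)]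
      ring
    simp only [hAdef]
    nlinarith
  -- g = exp(A) * (s - sInf)
  set g : ℝ → ℝ := fun t => Real.exp (A t) * (s t - sInf) with hgdef
  have hg : ∀ t, 0 ≤ t →
      HasDerivAt g (Real.exp (A t) * ((l t - lInf) * (1 - sInf))) t := by
    intro t ht
    have h1 := ((hA t).exp).mul ((hode t ht).sub_const sInf)
    refine h1.congr_deriv ?_
    have : -(δ + ε) * s t + l t * (1 - s t)
        = -(k + l t) * (s t - sInf) + (l t - lInf) * (1 - sInf) := by
      rw [hkdef] at hkey ⊢
      nlinarith [hkey]
    rw [this]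
    ring
  set F : ℝ → ℝ := fun r => Real.exp (A r) * ((l r - lInf) * (1 - sInf)) with hFdef
  have hFcont : Continuous F :=
    (hAcont.rexp).mul (((hl_cont.sub continuous_const)).mul continuous_const)
  refine ⟨|s 0 - sInf| + C / (k - η), by positivity, ?_⟩
  intro t ht
  -- FTC
  have hftc : g t - g 0 = ∫ r in (0:ℝ)..t, F r := by
    rw [intervalIntegral.integral_eq_sub_of_hasDerivAt
      (fun r hr => hg r (by rw [Set.uIcc_of_le ht] at hr; exact hr.1))
      (hFcont.intervalIntegrable 0 t)]
  have hg0 : g 0 = s 0 - sInf := by simp [hgdef, hA0]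
  -- pointwise bound on |F|
  have hFbound : ∀ r, 0 ≤ r → |F r| ≤ Real.exp (A r) * (C * Real.exp (-η * r)) := by
    intro r hr
    rw [hFdef]
    simp only
    rw [abs_mul, abs_mul, Real.abs_exp, abs_of_nonneg (by linarith : (0:ℝ) ≤ 1 - sInf)]
    have h1 := hl_conv r hr
    have h2 : |l r - lInf| * (1 - sInf) ≤ C * Real.exp (-η * r) := by
      calc |l r - lInf| * (1 - sInf) ≤ |l r - lInf| * 1 :=
            mul_le_mul_of_nonneg_left (by linarith) (abs_nonneg _)
        _ ≤ C * Real.exp (-η * r) := by rw [mul_one]; exact h1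
    exact mul_le_mul_of_nonneg_left h2 (Real.exp_pos _).le
  -- bound the integral
  have hint1 : |∫ r in (0:ℝ)..t, F r| ≤
      ∫ r in (0:ℝ)..t, Real.exp (A r) * (C * Real.exp (-η * r)) := by
    calc |∫ r in (0:ℝ)..t, F r| ≤ ∫ r in (0:ℝ)..t, |F r| :=
          intervalIntegral.abs_integral_le_integral_abs ht
      _ ≤ ∫ r in (0:ℝ)..t, Real.exp (A r) * (C * Real.exp (-η * r)) :=
          intervalIntegral.integral_mono_on ht (hFcont.abs.intervalIntegrable 0 t)
            (((hAcont.rexp).mul (continuous_const.mul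
              ((continuous_const.mul continuous_id).rexp))).intervalIntegrable 0 t)
            (fun r hr => hFbound r hr.1)
  -- main estimate
  have hst : s t - sInf = Real.exp (-A t) * g t := by
    rw [hgdef]
    simp only
    rw [← mul_assoc, ← Real.exp_add]
    simp
  have habs : |s t - sInf| ≤ Real.exp (-A t) * (|s 0 - sInf| + |∫ r in (0:ℝ)..t, F r|) := by
    rw [hst, abs_mul, Real.abs_exp]
    refine mul_le_mul_of_nonneg_left ?_ (Real.exp_pos _).le
    have : g t = g 0 + ∫ r in (0:ℝ)..t, F r := by linarith [hftc]
    rw [this, hg0]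
    exact (abs_add_le _ _)
  -- exp(-A t) ≤ exp(-k t) ≤ exp(-η t)
  have hAt : k * t ≤ A t := by
    have := hAgrow 0 t le_rfl ht
    simpa [hA0] using this
  have hexpA : Real.exp (-A t) ≤ Real.exp (-(k*t)) := by
    apply Real.exp_le_exp.mpr; linarith
  -- bound the integral term after multiplying by exp(-A t)
  have hterm2 : Real.exp (-A t) * ∫ r in (0:ℝ)..t, Real.exp (A r) * (C * Real.exp (-η * r))
      ≤ C / (k - η) * Real.exp (-η * t) := by
    rw [← intervalIntegral.integral_const_mul]
    have hmono : ∫ r in (0:ℝ)..t, Real.exp (-A t) * (Real.exp (A r) * (C * Real.exp (-η * r)))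
        ≤ ∫ r in (0:ℝ)..t, C * Real.exp (-(k-η) * (t - r)) * Real.exp (-η * t) := by
      refine intervalIntegral.integral_mono_on ht
        ((continuous_const.mul ((hAcont.rexp).mul (continuous_const.mul
          ((continuous_const.mul continuous_id).rexp)))).intervalIntegrable 0 t)
        ((((continuous_const.mul (((continuous_const.mul
          (continuous_const.sub continuous_id)).rexp))).mul continuous_const)).intervalIntegrable 0 t)
        ?_
      intro r hr
      have h1 : k * (t - r) ≤ A t - A r := hAgrow r t hr.1 hr.2
      have h2 : Real.exp (-A t) * Real.exp (A r) ≤ Real.exp (-(k * (t - r))) := by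
        rw [← Real.exp_add]
        apply Real.exp_le_exp.mpr
        linarith
      calc Real.exp (-A t) * (Real.exp (A r) * (C * Real.exp (-η * r)))
          = (Real.exp (-A t) * Real.exp (A r)) * (C * Real.exp (-η * r)) := by ring
        _ ≤ Real.exp (-(k * (t - r))) * (C * Real.exp (-η * r)) :=
            mul_le_mul_of_nonneg_right h2 (by positivity)
        _ = C * Real.exp (-(k-η) * (t - r)) * Real.exp (-η * t) := by
            have e : (-(k * (t - r))) + (-η * r) = (-(k-η)*(t-r)) + (-η*t) := by ring
            rw [mul_left_comm, ← Real.exp_add, e, Real.exp_add]; ring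
    refine hmono.trans ?_
    have hcalc : ∫ r in (0:ℝ)..t, C * Real.exp (-(k-η) * (t - r)) * Real.exp (-η * t)
        = (C * Real.exp (-η * t) / (k - η)) * (1 - Real.exp (-(k-η)*t)) := by
      have hderiv : ∀ r ∈ Set.uIcc (0:ℝ) t,
          HasDerivAt (fun r => C * Real.exp (-η * t) / (k - η) * Real.exp (-(k-η) * (t - r)))
            (C * Real.exp (-(k-η) * (t - r)) * Real.exp (-η * t)) r := by
        intro r _
        have h1 : HasDerivAt (fun r : ℝ => -(k-η) * (t - r)) (k - η) r := by
          simpa using ((hasDerivAt_id r).const_sub t).const_mul (-(k-η))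
        have h2 := (h1.exp).const_mul (C * Real.exp (-η * t) / (k - η))
        refine h2.congr_deriv ?_
        rw [div_mul_eq_mul_div, div_eq_iff hkη.ne']
        ring
      rw [intervalIntegral.integral_eq_sub_of_hasDerivAt hderiv
        (((continuous_const.mul (((continuous_const.mul
          (continuous_const.sub continuous_id)).rexp))).mul continuous_const).intervalIntegrable 0 t)]
      simp
      ring
    rw [hcalc]
    have h1 : 1 - Real.exp (-(k-η)*t) ≤ 1 := by
      have := Real.exp_pos (-(k-η)*t); linarith
    have h2 : 0 ≤ C * Real.exp (-η * t) / (k - η) := by positivity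
    calc C * Real.exp (-η * t) / (k - η) * (1 - Real.exp (-(k-η)*t))
        ≤ C * Real.exp (-η * t) / (k - η) * 1 := mul_le_mul_of_nonneg_left h1 h2
      _ = C / (k - η) * Real.exp (-η * t) := by ring
  -- conclude
  have hterm1 : Real.exp (-A t) * |s 0 - sInf| ≤ |s 0 - sInf| * Real.exp (-η * t) := by
    have h1 : Real.exp (-A t) ≤ Real.exp (-η * t) := by
      apply Real.exp_le_exp.mpr
      nlinarith
    calc Real.exp (-A t) * |s 0 - sInf| ≤ Real.exp (-η * t) * |s 0 - sInf| :=
          mul_le_mul_of_nonneg_right h1 (abs_nonneg _)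
      _ = |s 0 - sInf| * Real.exp (-η * t) := by ring
  have hfinal : |s t - sInf| ≤ (|s 0 - sInf| + C / (k - η)) * Real.exp (-η * t) := by
    have h2 : Real.exp (-A t) * |∫ r in (0:ℝ)..t, F r| ≤ C / (k - η) * Real.exp (-η * t) := by
      refine le_trans ?_ hterm2
      exact mul_le_mul_of_nonneg_left hint1 (Real.exp_pos _).le
    calc |s t - sInf| ≤ Real.exp (-A t) * (|s 0 - sInf| + |∫ r in (0:ℝ)..t, F r|) := habs
      _ = Real.exp (-A t) * |s 0 - sInf| + Real.exp (-A t) * |∫ r in (0:ℝ)..t, F r| := by ring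
      _ ≤ |s 0 - sInf| * Real.exp (-η * t) + C / (k - η) * Real.exp (-η * t) := add_le_add hterm1 h2
      _ = (|s 0 - sInf| + C / (k - η)) * Real.exp (-η * t) := by ring
  simpa [hsInfdef, hkdef] using hfinal
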